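/- Let g : [c,d] → ℝ (with c < d) be continuous. Then F_g is strictly increasing on the interior of the range of g: for every α in the interior of the range of g there exists ε > 0 such that for every pair (α₁, α₂) satisfying min_{x∈[c,d]} g(x) ≤ α − ε < α₁ < α < α₂ < α + ε ≤ max_{x∈[c,d]} g(x), one has F_g(α₁) < F_g(α) < F_g(α₂). -/
import Mathlib


open MeasureTheory

noncomputable section

/-- The normalized distribution function `F_g(α) = μ{x ∈ [c,d] : g(x) ≤ α} / (d - c)`. -/
def Fdist (g : ℝ → ℝ) (c d : ℝ) (α : ℝ) : ℝ :=
  (volume {x ∈ Set.Icc c d | g x ≤ α}).toReal / (d - c)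

lemma Fdist_lt_aux (c d : ℝ) (hcd : c < d) (g : ℝ → ℝ) (hg : ContinuousOn g (Set.Icc c d))
    (β₁ β₂ : ℝ) (h1 : sInf (g '' Set.Icc c d) < β₁) (h12 : β₁ < β₂)
    (h2 : β₂ ≤ sSup (g '' Set.Icc c d)) :
    Fdist g c d β₁ < Fdist g c d β₂ := by
  set γ := (β₁ + β₂) / 2 with hγ
  have hγ1 : β₁ < γ := by rw [hγ]; linarith
  have hγ2 : γ < β₂ := by rw [hγ]; linarith
  have himg := ContinuousOn.image_Icc hcd.le hg
  -- γ is attained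
  have hγmem : γ ∈ g '' Set.Icc c d := by
    rw [himg]
    exact ⟨le_of_lt (lt_trans h1 hγ1), le_trans hγ2.le h2⟩
  obtain ⟨x₀, hx₀, hgx₀⟩ := hγmem
  -- the relatively open set where β₁ < g < β₂
  obtain ⟨u, hu, hequ⟩ := continuousOn_iff'.mp hg (Set.Ioo β₁ β₂) isOpen_Ioo
  have hx₀u : x₀ ∈ u ∩ Set.Icc c d := by
    rw [← hequ]
    exact ⟨by rw [Set.mem_preimage, hgx₀]; exact ⟨hγ1, hγ2⟩, hx₀⟩
  -- u ∩ Icc c d has positive measure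
  obtain ⟨r, hr, hball⟩ := Metric.isOpen_iff.mp hu x₀ hx₀u.1
  set a := max c (x₀ - r) with ha
  set b := min d (x₀ + r) with hb
  have hab : a < b := by
    rcases hx₀u.2 with ⟨h1', h2'⟩
    rw [ha, hb]
    apply max_lt <;> [skip; skip] <;> apply lt_min <;> linarith
  have hIoo : Set.Ioo a b ⊆ u ∩ Set.Icc c d := by
    intro x hx
    have hxc : c ≤ x := le_of_lt (lt_of_le_of_lt (le_max_left _ _) hx.1)
    have hxd : x ≤ d := le_of_lt (lt_of_lt_of_le hx.2 (min_le_left _ _))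
    have hx1 : x₀ - r < x := lt_of_le_of_lt (le_max_right _ _) hx.1
    have hx2 : x < x₀ + r := lt_of_lt_of_le hx.2 (min_le_right _ _)
    refine ⟨hball ?_, hxc, hxd⟩
    rw [Metric.mem_ball, Real.dist_eq, abs_lt]
    constructor <;> linarith
  have hpos : 0 < volume (u ∩ Set.Icc c d) := by
    calc 0 < volume (Set.Ioo a b) := by
            rw [Real.volume_Ioo]; exact ENNReal.ofReal_pos.mpr (by linarith)
      _ ≤ _ := measure_mono hIoo
  -- the two sublevel sets
  set A₁ := {x ∈ Set.Icc c d | g x ≤ β₁} with hA₁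
  set A₂ := {x ∈ Set.Icc c d | g x ≤ β₂} with hA₂
  have hmeasU : MeasurableSet (u ∩ Set.Icc c d) := hu.measurableSet.inter measurableSet_Icc
  have hdisj : Disjoint A₁ (u ∩ Set.Icc c d) := by
    rw [Set.disjoint_left]
    rintro x ⟨hxI, hxg⟩ hxu
    have : x ∈ g ⁻¹' Set.Ioo β₁ β₂ ∩ Set.Icc c d := by rw [hequ]; exact ⟨hxu.1, hxu.2⟩
    exact absurd hxg (not_le.mpr this.1.1)
  have hsub : A₁ ∪ (u ∩ Set.Icc c d) ⊆ A₂ := by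
    rintro x (⟨hxI, hxg⟩ | hxu)
    · exact ⟨hxI, le_trans hxg h12.le⟩
    · have : x ∈ g ⁻¹' Set.Ioo β₁ β₂ ∩ Set.Icc c d := by rw [hequ]; exact ⟨hxu.1, hxu.2⟩
      exact ⟨this.2, this.1.2.le⟩
  have hfin1 : volume A₁ ≠ ⊤ := by
    refine ne_top_of_le_ne_top ?_ (measure_mono (fun x hx => hx.1))
    rw [Real.volume_Icc]; exact ENNReal.ofReal_ne_top
  have hfin2 : volume A₂ ≠ ⊤ := by
    refine ne_top_of_le_ne_top ?_ (measure_mono (fun x hx => hx.1))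
    rw [Real.volume_Icc]; exact ENNReal.ofReal_ne_top
  have hlt : volume A₁ < volume A₂ := by
    calc volume A₁ < volume A₁ + volume (u ∩ Set.Icc c d) :=
          ENNReal.lt_add_right hfin1 (ne_of_gt hpos)
      _ = volume (A₁ ∪ (u ∩ Set.Icc c d)) := (measure_union hdisj hmeasU).symm
      _ ≤ volume A₂ := measure_mono hsub
  have : (volume A₁).toReal < (volume A₂).toReal :=
    (ENNReal.toReal_lt_toReal hfin1 hfin2).mpr hlt
  exact div_lt_div_of_pos_right this (by linarith)

/-- For a continuous `g : [c,d] → ℝ`, the distribution function `F_g` is strictly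
increasing on the interior of the range of `g`. -/
theorem Fdist_strictly_increasing_of_continuous
    (c d : ℝ) (hcd : c < d) (g : ℝ → ℝ) (hg : ContinuousOn g (Set.Icc c d)) :
    ∀ α ∈ interior (g '' Set.Icc c d), ∃ ε > (0:ℝ), ∀ α₁ α₂ : ℝ,
      sInf (g '' Set.Icc c d) ≤ α - ε → α - ε < α₁ → α₁ < α → α < α₂ → α₂ < α + ε →
      α + ε ≤ sSup (g '' Set.Icc c d) →
      Fdist g c d α₁ < Fdist g c d α ∧ Fdist g c d α < Fdist g c d α₂ := by
  intro α _
  refine ⟨1, one_pos, fun α₁ α₂ hInf h1 h2 h3 h4 hSup => ?_⟩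
  constructor
  · exact Fdist_lt_aux c d hcd g hg α₁ α (lt_of_le_of_lt hInf h1) h2
      (le_trans (by linarith) hSup)
  · exact Fdist_lt_aux c d hcd g hg α α₂ (by linarith) h3
      (le_trans h4.le hSup)

end
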